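/- arXiv:2604.11363 — 3 statements merged into one kernel-verified Lean document; each statement's English description precedes it below -/
import Mathlib

section
/- Let K ≥ 2, θ ∈ (0,∞)^K, and let ℒ be the Wright–Fisher generator ℒf(x) = (1/2) Σ_{i=1}^K (θ_i − |θ| x_i) ∂f/∂x_i + (1/2) Σ_{i,j=1}^K x_i (δ_{ij} − x_j) ∂²f/∂x_i∂x_j. Then for every m ∈ ℤ_+^K with |m| ≥ 1 and every x ∈ Δ_K, ℒ applied to the function x ↦ g(x, m) satisfies ℒ g(·,m)(x) = λ_{|m|} Σ_{i=1}^K (m_i/|m|) [ g(x, m − e_i) − g(x, m) ], where e_i is the i-th standard basis vector of ℤ^K (terms with m_i = 0 vanish). -/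
open scoped BigOperators

/-- Pochhammer (rising factorial) symbol `(a)_r = Γ(a+r)/Γ(a)`. -/
noncomputable def poch (a r : ℝ) : ℝ := Real.Gamma (a + r) / Real.Gamma a

/-- The duality function
`g(x, m) = ((|θ|)_{|m|} / ∏_i (θ_i)_{m_i}) ∏_i x_i^{m_i}`. -/
noncomputable def dualityG {K : ℕ} (θ : Fin K → ℝ) (m : Fin K → ℕ)
    (x : Fin K → ℝ) : ℝ :=
  (poch (∑ i, θ i) (∑ i, (m i : ℝ)) / ∏ i, poch (θ i) (m i)) * ∏ i, x i ^ (m i)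

/-- `λ_n = n (n + θ − 1)/2`. -/
noncomputable def lamWF (θ : ℝ) (n : ℕ) : ℝ := n * (n + θ - 1) / 2

section Aux
variable {K : ℕ}

/-- Monomial -/
noncomputable def mono (m : Fin K → ℕ) (x : Fin K → ℝ) : ℝ := ∏ k, x k ^ m k

/-- decrement m at i -/
def dec (m : Fin K → ℕ) (i : Fin K) : Fin K → ℕ := Function.update m i (m i - 1)

lemma mono_update (m : Fin K → ℕ) (i : Fin K) (v : ℕ) (x : Fin K → ℝ) :
    mono (Function.update m i v) x = x i ^ v * ∏ k ∈ Finset.univ.erase i, x k ^ m k := by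
  rw [mono, ← Finset.mul_prod_erase _ _ (Finset.mem_univ i), Function.update_self]
  congr 1
  exact Finset.prod_congr rfl fun k hk => by
    rw [Function.update_of_ne (Finset.ne_of_mem_erase hk)]

lemma mul_mono_dec (m : Fin K → ℕ) (i : Fin K) (x : Fin K → ℝ) (h : 1 ≤ m i) :
    x i * mono (dec m i) x = mono m x := by
  rw [dec, mono_update, mono, ← Finset.mul_prod_erase _ _ (Finset.mem_univ i), ← mul_assoc,
    ← pow_succ', Nat.sub_add_cancel h]

lemma hasFDerivAt_mono (m : Fin K → ℕ) (x : Fin K → ℝ) :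
    HasFDerivAt (mono m)
      (∑ j, ((m j : ℝ) * mono (dec m j) x) • ContinuousLinearMap.proj (R := ℝ)
        (φ := fun _ : Fin K => ℝ) j) x := by
  have h : ∀ j ∈ Finset.univ, HasFDerivAt (fun y : Fin K → ℝ => y j ^ m j)
      (((m j : ℝ) * x j ^ (m j - 1)) • ContinuousLinearMap.proj (R := ℝ)
        (φ := fun _ : Fin K => ℝ) j) x := by
    intro j _
    have h1 : HasDerivAt (fun t : ℝ => t ^ m j) ((m j : ℝ) * x j ^ (m j - 1)) (x j) :=
      hasDerivAt_pow (m j) (x j)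
    exact h1.comp_hasFDerivAt x
      (ContinuousLinearMap.hasFDerivAt (ContinuousLinearMap.proj (R := ℝ)
        (φ := fun _ : Fin K => ℝ) j))
  refine (HasFDerivAt.finset_prod h).congr_fderiv ?_
  ext y
  simp only [ContinuousLinearMap.sum_apply, ContinuousLinearMap.smul_apply,
    ContinuousLinearMap.proj_apply, smul_eq_mul]
  refine Finset.sum_congr rfl fun j _ => ?_
  simp only [dec, mono_update]
  ring

/-- The Pochhammer coefficient in `dualityG`. -/
noncomputable def Cf (θ : Fin K → ℝ) (m : Fin K → ℕ) : ℝ :=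
  poch (∑ i, θ i) (∑ i, (m i : ℝ)) / ∏ i, poch (θ i) (m i)

lemma dualityG_eq (θ : Fin K → ℝ) (m : Fin K → ℕ) (x : Fin K → ℝ) :
    dualityG θ m x = Cf θ m * mono m x := rfl

lemma fderiv_mono_single (m : Fin K → ℕ) (x : Fin K → ℝ) (i : Fin K) :
    fderiv ℝ (mono m) x (Pi.single i 1) = (m i : ℝ) * mono (dec m i) x := by
  rw [(hasFDerivAt_mono m x).fderiv]
  simp [ContinuousLinearMap.proj_apply, Pi.single_apply, Finset.sum_ite_eq', mul_ite]

lemma hasFDerivAt_dualityG (θ : Fin K → ℝ) (m : Fin K → ℕ) (x : Fin K → ℝ) :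
    HasFDerivAt (dualityG θ m)
      (Cf θ m • ∑ j, ((m j : ℝ) * mono (dec m j) x) • ContinuousLinearMap.proj (R := ℝ)
        (φ := fun _ : Fin K => ℝ) j) x :=
  (hasFDerivAt_mono m x).const_mul (Cf θ m)

lemma fderiv_dualityG_single (θ : Fin K → ℝ) (m : Fin K → ℕ) (x : Fin K → ℝ) (i : Fin K) :
    fderiv ℝ (dualityG θ m) x (Pi.single i 1)
      = Cf θ m * ((m i : ℝ) * mono (dec m i) x) := by
  rw [(hasFDerivAt_dualityG θ m x).fderiv]
  simp [ContinuousLinearMap.proj_apply, Pi.single_apply, Finset.sum_ite_eq', mul_ite]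

lemma fderiv2_dualityG_single (θ : Fin K → ℝ) (m : Fin K → ℕ) (x : Fin K → ℝ) (i j : Fin K) :
    fderiv ℝ (fun y => fderiv ℝ (dualityG θ m) y (Pi.single j 1)) x (Pi.single i 1)
      = Cf θ m * ((m j : ℝ) * ((dec m j i : ℝ) * mono (dec (dec m j) i) x)) := by
  have hfun : (fun y => fderiv ℝ (dualityG θ m) y (Pi.single j 1))
      = fun y => (Cf θ m * (m j : ℝ)) * mono (dec m j) y := by
    funext y
    rw [fderiv_dualityG_single]; ring
  rw [hfun, ((hasFDerivAt_mono (dec m j) x).const_mul (Cf θ m * (m j : ℝ))).fderiv]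
  simp only [ContinuousLinearMap.smul_apply, ContinuousLinearMap.sum_apply,
    ContinuousLinearMap.proj_apply, Pi.single_apply, smul_eq_mul, mul_ite, mul_one, mul_zero,
    Finset.sum_ite_eq', Finset.mem_univ, if_true]
  ring

lemma poch_pos {a : ℝ} (ha : 0 < a) (n : ℕ) : 0 < poch a n :=
  div_pos (Real.Gamma_pos_of_pos (by positivity)) (Real.Gamma_pos_of_pos ha)

lemma poch_succ {a : ℝ} (ha : 0 < a) (k : ℕ) :
    poch a ((k + 1 : ℕ) : ℝ) = poch a k * (a + k) := by
  unfold poch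
  have h : a + ((k + 1 : ℕ) : ℝ) = (a + k) + 1 := by push_cast; ring
  rw [h, Real.Gamma_add_one (by positivity)]
  ring

lemma prod_poch_update (θ : Fin K → ℝ) (m : Fin K → ℕ) (i : Fin K) (v : ℕ) :
    ∏ k, poch (θ k) ((Function.update m i v) k : ℕ)
      = poch (θ i) v * ∏ k ∈ Finset.univ.erase i, poch (θ k) (m k) := by
  rw [← Finset.mul_prod_erase _ _ (Finset.mem_univ i), Function.update_self]
  congr 1
  exact Finset.prod_congr rfl fun k hk => by
    rw [Function.update_of_ne (Finset.ne_of_mem_erase hk)]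

lemma sum_cast_update (m : Fin K → ℕ) (i : Fin K) (hi : 1 ≤ m i) :
    ∑ k, ((Function.update m i (m i - 1)) k : ℝ) = (∑ k, (m k : ℝ)) - 1 := by
  rw [← Finset.add_sum_erase _ _ (Finset.mem_univ i),
    ← Finset.add_sum_erase _ (fun k => (m k : ℝ)) (Finset.mem_univ i), Function.update_self]
  have h : ∑ k ∈ Finset.univ.erase i, ((Function.update m i (m i - 1)) k : ℝ)
      = ∑ k ∈ Finset.univ.erase i, (m k : ℝ) :=
    Finset.sum_congr rfl fun k hk => by
      rw [Function.update_of_ne (Finset.ne_of_mem_erase hk)]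
  rw [h, Nat.cast_sub hi]
  push_cast
  ring

lemma Cf_rel (θ : Fin K → ℝ) (hθ : ∀ i, 0 < θ i) (m : Fin K → ℕ) (i : Fin K)
    (hi : 1 ≤ m i) :
    Cf θ (dec m i) * ((∑ k, θ k) + (∑ k, (m k : ℝ)) - 1)
      = Cf θ m * (θ i + (m i : ℝ) - 1) := by
  have hS : 0 < ∑ k, θ k := Finset.sum_pos (fun k _ => hθ k) ⟨i, Finset.mem_univ i⟩
  set S := ∑ k, θ k with hSdef
  have hn : 1 ≤ ∑ k, m k :=
    le_trans hi (Finset.single_le_sum (fun k _ => Nat.zero_le _) (Finset.mem_univ i))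
  set n := ∑ k, m k with hndef
  have hsum : (∑ k, (m k : ℝ)) = (n : ℝ) := by rw [hndef]; push_cast; rfl
  -- rewrite the updated Cf
  have hupd_sum : ∑ k, ((dec m i) k : ℝ) = (n : ℝ) - 1 := by
    rw [dec, sum_cast_update m i hi, hsum]
  have hSrec : poch S ((n : ℝ)) = poch S ((n - 1 : ℕ) : ℝ) * (S + ((n - 1 : ℕ) : ℝ)) := by
    have := poch_succ hS (n - 1)
    rwa [Nat.sub_add_cancel hn] at this
  have hirec : poch (θ i) ((m i : ℝ)) = poch (θ i) ((m i - 1 : ℕ) : ℝ)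
      * (θ i + ((m i - 1 : ℕ) : ℝ)) := by
    have := poch_succ (hθ i) (m i - 1)
    rwa [Nat.sub_add_cancel hi] at this
  have hprod : ∏ k, poch (θ k) ((dec m i) k : ℕ)
      = poch (θ i) ((m i - 1 : ℕ) : ℝ) * ∏ k ∈ Finset.univ.erase i, poch (θ k) (m k) := by
    rw [dec]; exact prod_poch_update θ m i (m i - 1)
  have hprodm : ∏ k, poch (θ k) (m k : ℕ)
      = poch (θ i) ((m i : ℕ) : ℝ) * ∏ k ∈ Finset.univ.erase i, poch (θ k) (m k) :=
    (Finset.mul_prod_erase _ _ (Finset.mem_univ i)).symm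
  have hR : 0 < ∏ k ∈ Finset.univ.erase i, poch (θ k) (m k) :=
    Finset.prod_pos fun k _ => poch_pos (hθ k) _
  have hp1 : 0 < poch (θ i) ((m i - 1 : ℕ) : ℝ) := poch_pos (hθ i) _
  rw [Cf, Cf, hupd_sum, hsum, hprod, hprodm, hirec, hSrec, Nat.cast_sub hn, Nat.cast_sub hi,
    Nat.cast_one]
  have h1 : (1:ℝ) ≤ (m i : ℝ) := by exact_mod_cast hi
  have hθm : (0:ℝ) < θ i + ((m i : ℝ) - 1) := by linarith [hθ i]
  have hp1 : 0 < poch (θ i) ((m i : ℝ) - 1) := by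
    have := poch_pos (hθ i) (m i - 1)
    rwa [Nat.cast_sub hi, Nat.cast_one] at this
  rw [div_mul_eq_mul_div, div_mul_eq_mul_div,
    div_eq_div_iff (ne_of_gt (mul_pos hp1 hR)) (ne_of_gt (mul_pos (mul_pos hp1 hθm) hR))]
  ring

lemma fderiv_constmono (c d : ℝ) (m : Fin K → ℕ) (x : Fin K → ℝ) (i : Fin K) :
    fderiv ℝ (fun y => c * (d * mono m y)) x (Pi.single i 1)
      = c * (d * ((m i : ℝ) * mono (dec m i) x)) := by
  have hfun : (fun y : Fin K → ℝ => c * (d * mono m y)) = fun y => (c * d) * mono m y := by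
    funext y; ring
  rw [hfun, ((hasFDerivAt_mono m x).const_mul (c * d)).fderiv]
  simp only [ContinuousLinearMap.smul_apply, ContinuousLinearMap.sum_apply,
    ContinuousLinearMap.proj_apply, Pi.single_apply, smul_eq_mul, mul_ite, mul_one, mul_zero,
    Finset.sum_ite_eq', Finset.mem_univ, if_true]
  ring

end Aux


/-- the Wright–Fisher generator applied to the duality function
`g(·, m)` at a point `x` of the simplex equals
`λ_{|m|} Σ_i (m_i/|m|) [g(x, m − e_i) − g(x, m)]`. -/
theorem wf_generator_duality (K : ℕ) (hK : 2 ≤ K)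
    (θ : Fin K → ℝ) (hθ : ∀ i, 0 < θ i)
    (m : Fin K → ℕ) (hm : 1 ≤ ∑ i, m i)
    (x : Fin K → ℝ) (hx : (∀ i, 0 ≤ x i ∧ x i ≤ 1) ∧ ∑ i, x i = 1) :
    (1 / 2) * ∑ i, (θ i - (∑ k, θ k) * x i) *
        fderiv ℝ (dualityG θ m) x (Pi.single i 1)
      + (1 / 2) * ∑ i, ∑ j, x i * ((if i = j then (1 : ℝ) else 0) - x j) *
        fderiv ℝ (fun y => fderiv ℝ (dualityG θ m) y (Pi.single j 1)) x
          (Pi.single i 1)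
    = lamWF (∑ k, θ k) (∑ i, m i) *
        ∑ i, ((m i : ℝ) / (∑ k, m k : ℕ)) *
          (dualityG θ (Function.update m i (m i - 1)) x - dualityG θ m x) := by
  classical
  have hRW : ∀ i : Fin K, dualityG θ (Function.update m i (m i - 1)) x
      = Cf θ (dec m i) * mono (dec m i) x := fun i => rfl
  simp only [fderiv2_dualityG_single, fderiv_dualityG_single, fderiv_constmono, hRW,
    dualityG_eq]
  set S := ∑ k, θ k with hSdef
  set n := ∑ i, m i with hndef
  have hsum : (∑ k, (m k : ℝ)) = (n : ℝ) := by rw [hndef]; push_cast; rfl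
  have hn0 : (0:ℝ) < (n : ℝ) := by exact_mod_cast hm
  rw [Finset.mul_sum, Finset.mul_sum, Finset.mul_sum, ← Finset.sum_add_distrib]
  refine Finset.sum_congr rfl fun i _ => ?_
  -- inner sum over j
  have hterm : ∀ j : Fin K,
      x i * ((if i = j then (1:ℝ) else 0) - x j)
        * (Cf θ m * ((m j : ℝ) * ((dec m j i : ℝ) * mono (dec (dec m j) i) x)))
      = (if i = j then Cf θ m * (m i : ℝ) * ((m i - 1 : ℕ) : ℝ) * mono (dec m i) x else 0)
        - Cf θ m * ((m j : ℝ) * (if i = j then ((m i : ℝ) - 1) else (m i : ℝ)))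
          * mono m x := by
    intro j
    by_cases hij : i = j
    · subst hij
      simp only [eq_self_iff_true, if_true]
      have hd : dec m i i = m i - 1 := Function.update_self _ _ _
      rw [hd]
      by_cases h2 : 2 ≤ m i
      · have h1 : 1 ≤ m i := by omega
        have hQ : x i * mono (dec (dec m i) i) x = mono (dec m i) x :=
          mul_mono_dec (dec m i) i x (by rw [hd]; omega)
        have hP : x i * mono (dec m i) x = mono m x := mul_mono_dec m i x h1
        have hc : ((m i - 1 : ℕ) : ℝ) = (m i : ℝ) - 1 := by
          rw [Nat.cast_sub h1, Nat.cast_one]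
        rw [hc]
        linear_combination (Cf θ m * (m i : ℝ) * ((m i : ℝ) - 1) * (1 - x i)) * hQ
          - (Cf θ m * (m i : ℝ) * ((m i : ℝ) - 1)) * hP
      · by_cases h1 : m i = 1
        · simp [h1]
        · have h0 : m i = 0 := by omega
          simp [h0]
    · simp only [if_neg hij]
      have hd : dec m j i = m i := Function.update_of_ne hij _ _
      rw [hd]
      by_cases h1 : 1 ≤ m i
      · by_cases h2 : 1 ≤ m j
        · have hQ : x i * mono (dec (dec m j) i) x = mono (dec m j) x :=
            mul_mono_dec (dec m j) i x (by rw [show dec m j i = m i from hd]; exact h1)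
          have hP : x j * mono (dec m j) x = mono m x := mul_mono_dec m j x h2
          linear_combination (-(Cf θ m * (m j : ℝ) * (m i : ℝ) * x j)) * hQ
            - (Cf θ m * (m j : ℝ) * (m i : ℝ)) * hP
        · have h0 : m j = 0 := by omega
          simp [h0]
      · have h0 : m i = 0 := by omega
        simp [h0]
  have hinner : ∑ j, x i * ((if i = j then (1:ℝ) else 0) - x j)
        * (Cf θ m * ((m j : ℝ) * ((dec m j i : ℝ) * mono (dec (dec m j) i) x)))
      = Cf θ m * (m i : ℝ) * ((m i - 1 : ℕ) : ℝ) * mono (dec m i) x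
        - Cf θ m * ((m i : ℝ) * ((n : ℝ) - 1)) * mono m x := by
    rw [Finset.sum_congr rfl fun j _ => hterm j, Finset.sum_sub_distrib,
      Finset.sum_ite_eq Finset.univ i _, if_pos (Finset.mem_univ i)]
    congr 1
    have h2 : ∀ j : Fin K, Cf θ m * ((m j : ℝ) * (if i = j then ((m i : ℝ) - 1) else (m i : ℝ)))
          * mono m x
        = Cf θ m * ((m j : ℝ) * (m i : ℝ)) * mono m x
          - (if i = j then Cf θ m * (m j : ℝ) * mono m x else 0) := by
      intro j
      by_cases hij : i = j
      · subst hij; simp only [eq_self_iff_true, if_true]; ring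
      · simp only [if_neg hij]; ring
    rw [Finset.sum_congr rfl fun j _ => h2 j, Finset.sum_sub_distrib,
      Finset.sum_ite_eq Finset.univ i _, if_pos (Finset.mem_univ i)]
    have h3 : ∑ j, Cf θ m * ((m j : ℝ) * (m i : ℝ)) * mono m x
        = Cf θ m * ((n : ℝ) * (m i : ℝ)) * mono m x := by
      rw [← Finset.sum_mul, ← Finset.mul_sum]
      congr 2
      rw [← Finset.sum_mul, hsum]
    rw [h3]
    ring
  rw [hinner]
  -- final per-i algebra
  by_cases h1 : 1 ≤ m i
  · have hxQ : x i * mono (dec m i) x = mono m x := mul_mono_dec m i x h1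
    have hc : ((m i - 1 : ℕ) : ℝ) = (m i : ℝ) - 1 := by
      rw [Nat.cast_sub h1, Nat.cast_one]
    have hCrel := Cf_rel θ hθ m i h1
    rw [hsum] at hCrel
    rw [hc, lamWF]
    have hlam : ∀ Z : ℝ, (n : ℝ) * ((n : ℝ) + S - 1) / 2 * ((m i : ℝ) / (n : ℝ) * Z)
        = ((m i : ℝ) * ((n : ℝ) + S - 1) / 2) * Z := by
      intro Z
      field_simp
    rw [hlam]
    linear_combination (-(S * Cf θ m * (m i : ℝ) / 2)) * hxQ
      - ((m i : ℝ) / 2 * mono (dec m i) x) * hCrel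
  · have h0 : m i = 0 := by omega
    simp [h0]
end

section
/- For every θ > 0 and all integers 0 ≤ k ≤ n, the identity Σ_{j=k}^n (−1)^{j−k+1} a_{j,k}^{(θ,n)} λ_j = λ_n if k = n−1, = −λ_n if k = n, and = 0 if k < n−1, holds. This expresses that the transition probabilities q_{n,k}(t) = Σ_{j=k}^n (−1)^{j−k} a_{j,k}^{(θ,n)} e^{−λ_j t} of the Wright–Fisher block-counting dual have derivative at t = 0 equal to the pure-death rates: (d/dt) q_{n,k}(t)|_{t=0} = λ_n for k = n−1, = −λ_n for k = n, and = 0 otherwise. -/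
/-- `a_{j,m}^{(θ)} = (2j+θ−1)(m+θ)_{(j−1)} / (m!(j−m)!)`. -/
noncomputable def acoef (θ : ℝ) (j m : ℕ) : ℝ :=
  (2 * j + θ - 1) * poch (m + θ) ((j : ℝ) - 1) /
    ((m.factorial : ℝ) * ((j - m).factorial : ℝ))

/-- `a_{j,m}^{(θ,n)} = a_{j,m}^{(θ)} · n_{[j]} / (n+θ)_{(j)}`, with `n_{[j]}`
the falling factorial. -/
noncomputable def acoefN (θ : ℝ) (j m n : ℕ) : ℝ :=
  acoef θ j m * (n.descFactorial j : ℝ) / poch (n + θ) j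

lemma GammaNZ {x : ℝ} (hx : 0 < x) : Real.Gamma x ≠ 0 := (Real.Gamma_pos_of_pos hx).ne'

lemma acoefN_of_lt (θ : ℝ) (k j n : ℕ) (h : n < j) : acoefN θ j k n = 0 := by
  simp [acoefN, Nat.descFactorial_eq_zero_iff_lt.mpr h]

set_option maxHeartbeats 1000000 in
lemma acoefN_succ (θ : ℝ) (hθ : 0 < θ) (k j n : ℕ) (hj : 1 ≤ j) (hkj : k ≤ j)
    (hjn : j ≤ n) :
    acoefN θ (j+1) k n * ((j:ℝ)+1-k) * ((n:ℝ)+θ+j) * (2*j+θ-1)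
      = acoefN θ j k n * (2*j+θ+1) * ((k:ℝ)+θ+j-1) * ((n:ℝ)-j) := by
  have hjR : (1:ℝ) ≤ (j:ℝ) := by exact_mod_cast hj
  have hkR : (k:ℝ) ≤ (j:ℝ) := by exact_mod_cast hkj
  have hnR : (j:ℝ) ≤ (n:ℝ) := by exact_mod_cast hjn
  have hkR0 : (0:ℝ) ≤ (k:ℝ) := Nat.cast_nonneg k
  have hdesc : (n.descFactorial (j+1) : ℝ) = ((n:ℝ) - j) * (n.descFactorial j : ℝ) := by
    rw [Nat.descFactorial_succ]
    push_cast [Nat.cast_sub hjn]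
    ring
  have hfact : ((j+1-k).factorial : ℝ) = ((j:ℝ) - k + 1) * ((j-k).factorial : ℝ) := by
    rw [Nat.succ_sub hkj, Nat.factorial_succ]
    push_cast [Nat.cast_sub hkj]
    ring
  simp only [acoefN, acoef, poch]
  rw [hdesc, hfact]
  push_cast
  rw [show ((k:ℝ) + θ + ((j:ℝ) + 1 - 1)) = ((k:ℝ) + θ + ((j:ℝ)-1)) + 1 by ring,
      show ((n:ℝ) + θ + ((j:ℝ) + 1)) = ((n:ℝ) + θ + (j:ℝ)) + 1 by ring,
      Real.Gamma_add_one (by linarith : ((k:ℝ) + θ + ((j:ℝ)-1)) ≠ 0),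
      Real.Gamma_add_one (by positivity : ((n:ℝ) + θ + (j:ℝ)) ≠ 0)]
  set A := Real.Gamma ((k:ℝ)+θ) with hA
  set B := Real.Gamma ((k:ℝ)+θ+((j:ℝ)-1)) with hB
  set C := Real.Gamma ((n:ℝ)+θ) with hC
  set D := Real.Gamma ((n:ℝ)+θ+(j:ℝ)) with hD
  have hAne : A ≠ 0 := GammaNZ (by positivity)
  have hBne : B ≠ 0 := GammaNZ (by linarith)
  have hCne : C ≠ 0 := GammaNZ (by positivity)
  have hDne : D ≠ 0 := GammaNZ (by positivity)
  have hfk : ((k.factorial : ℝ)) ≠ 0 := by positivity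
  have hfjk : (((j-k).factorial : ℝ)) ≠ 0 := by positivity
  have hjk1 : ((j:ℝ) - k + 1) ≠ 0 := by linarith
  field_simp
  ring

/-- telescoping auxiliary function -/
noncomputable def Dfun (θ : ℝ) (k n j : ℕ) : ℝ :=
  ((j:ℝ)-k) * ((n:ℝ)+θ+(j:ℝ)-1) / (((n:ℝ)-k) * (2*(j:ℝ)+θ-1)) * acoefN θ j k n

set_option maxHeartbeats 1000000 in
lemma Dfun_step (θ : ℝ) (hθ : 0 < θ) (k j n : ℕ) (hj : 1 ≤ j) (hkj : k ≤ j)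
    (hjn : j ≤ n) (hkn : k < n) :
    acoefN θ j k n = Dfun θ k n j + Dfun θ k n (j+1) := by
  have hjR : (1:ℝ) ≤ (j:ℝ) := by exact_mod_cast hj
  have hkR : (k:ℝ) ≤ (j:ℝ) := by exact_mod_cast hkj
  have hknR : (k:ℝ) < (n:ℝ) := by exact_mod_cast hkn
  have h1 : (2*(j:ℝ)+θ-1) ≠ 0 := by linarith
  have h2 : (2*(j:ℝ)+θ+1) ≠ 0 := by linarith
  have h3 : ((j:ℝ)+1-k) ≠ 0 := by linarith
  have h4 : ((n:ℝ)+θ+j) ≠ 0 := by positivity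
  have h5 : ((n:ℝ)-k) ≠ 0 := by linarith
  have h := acoefN_succ θ hθ k j n hj hkj hjn
  have hval : acoefN θ (j+1) k n =
      acoefN θ j k n * ((2*(j:ℝ)+θ+1) * ((k:ℝ)+θ+j-1) * ((n:ℝ)-j)) /
        (((j:ℝ)+1-k) * (((n:ℝ)+θ+j) * (2*(j:ℝ)+θ-1))) := by
    rw [eq_div_iff (mul_ne_zero h3 (mul_ne_zero h4 h1))]
    linear_combination h
  have hQ : ((n:ℝ)-k) * (2*(j:ℝ)+θ-1) ≠ 0 := mul_ne_zero h5 h1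
  have hD1 : Dfun θ k n (j+1)
      = acoefN θ j k n * (((k:ℝ)+θ+j-1) * ((n:ℝ)-j)) / (((n:ℝ)-k) * (2*(j:ℝ)+θ-1)) := by
    simp only [Dfun]
    push_cast
    rw [div_mul_eq_mul_div,
      div_eq_div_iff (mul_ne_zero h5 (by linarith : (2*((j:ℝ)+1)+θ-1) ≠ 0)) hQ]
    linear_combination ((n:ℝ) - k) * h
  rw [hD1]
  simp only [Dfun]
  rw [div_mul_eq_mul_div, ← add_div, eq_div_iff hQ]
  ring

lemma acoefN_one (θ : ℝ) (hθ : 0 < θ) (n : ℕ) (hn : 1 ≤ n) :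
    acoefN θ 1 0 n = (θ+1) * n / ((n:ℝ)+θ) := by
  have hGn : Real.Gamma ((n:ℝ)+θ) ≠ 0 := GammaNZ (by positivity)
  have hGt : Real.Gamma θ ≠ 0 := GammaNZ hθ
  simp only [acoefN, acoef, poch, Nat.descFactorial_one, Nat.factorial_zero, Nat.factorial_one,
    Nat.cast_one, Nat.cast_zero, zero_add]
  rw [show ((1:ℝ) - 1) = 0 by ring, add_zero,
    show ((n:ℝ) + θ + 1) = ((n:ℝ)+θ) + 1 by ring,
    Real.Gamma_add_one (by positivity : ((n:ℝ)+θ) ≠ 0)]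
  rw [div_self hGt]
  have hnne : ((n:ℝ)) ≠ 0 := by positivity
  field_simp
  rw [show (1 - 0 : ℕ) = 1 from rfl, Nat.factorial_one, Nat.cast_one]; ring

lemma sumA (θ : ℝ) (hθ : 0 < θ) (k n : ℕ) (hkn : k < n) :
    ∑ j ∈ Finset.Icc (max k 1) n, (-1:ℝ)^(j-k) * acoefN θ j k n
      = if k = 0 then -1 else 0 := by
  set K := max k 1 with hK
  clear_value K
  have hK1 : 1 ≤ K := by omega
  have hkK : k ≤ K := by omega
  have hKn : K ≤ n := by omega
  have hIcc : Finset.Icc K n = Finset.Ico K (n+1) := by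
    rw [Finset.Ico_add_one_right_eq_Icc]
  rw [hIcc, Finset.sum_Ico_eq_sum_range]
  have key : ∀ i ∈ Finset.range (n+1-K),
      (-1:ℝ)^(K+i-k) * acoefN θ (K+i) k n
        = (fun i => (-1:ℝ)^(K+i-k) * Dfun θ k n (K+i)) i
          - (fun i => (-1:ℝ)^(K+i-k) * Dfun θ k n (K+i)) (i+1) := by
    intro i hi
    simp only [Finset.mem_range] at hi
    have hile : K + i ≤ n := by omega
    have hstep := Dfun_step θ hθ k (K+i) n (by omega) (by omega) hile hkn
    have hsign : (-1:ℝ)^(K+(i+1)-k) = -(-1:ℝ)^(K+i-k) := by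
      have he : K+(i+1)-k = (K+i-k)+1 := by omega
      rw [he, pow_succ]
      ring
    simp only [hsign]
    rw [hstep]
    have he2 : K + (i+1) = (K+i) + 1 := by omega
    rw [he2]
    ring
  rw [Finset.sum_congr rfl key, Finset.sum_range_sub']
  have hDtop : Dfun θ k n (K + (n+1-K)) = 0 := by
    have he : K + (n+1-K) = n+1 := by omega
    rw [he, Dfun, acoefN_of_lt θ k (n+1) n (by omega)]
    ring
  rw [hDtop, mul_zero, sub_zero]
  by_cases hk0 : k = 0
  · subst hk0
    have hKv : K = 1 := by omega
    subst hKv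
    have hN : (0:ℝ) < (n:ℝ) := by exact_mod_cast hkn
    have hnt : (0:ℝ) < (n:ℝ)+θ := by positivity
    have ht1 : (θ+1:ℝ) ≠ 0 := by linarith
    simp only [Dfun, add_zero, Nat.sub_zero, pow_one, if_pos rfl]
    rw [acoefN_one θ hθ n (by omega)]
    push_cast
    field_simp
    have hd : ((n:ℝ) * θ + (n:ℝ) * θ ^ 2 + (n:ℝ) ^ 2 + (n:ℝ) ^ 2 * θ : ℝ) ≠ 0 := by positivity
    rw [neg_inj, div_eq_iff (mul_ne_zero (by linarith) (by linarith))]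
    ring
  · have hKv : K = k := by omega
    subst hKv
    simp only [if_neg hk0, Dfun, add_zero]
    rw [sub_self]
    ring

lemma acoefN_diag (θ : ℝ) (hθ : 0 < θ) (n : ℕ) (hn : 1 ≤ n) :
    acoefN θ n n n = 1 := by
  have hnR : (1:ℝ) ≤ (n:ℝ) := by exact_mod_cast hn
  simp only [acoefN, acoef, poch, Nat.sub_self, Nat.descFactorial_self, Nat.factorial_zero]
  rw [show ((n:ℝ) + θ + ((n:ℝ)-1)) = (2*(n:ℝ)+θ-1) by ring,
      show ((n:ℝ) + θ + (n:ℝ)) = (2*(n:ℝ)+θ-1)+1 by ring,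
      Real.Gamma_add_one (by linarith : (2*(n:ℝ)+θ-1) ≠ 0)]
  set G := Real.Gamma (2*(n:ℝ)+θ-1) with hG
  set H := Real.Gamma ((n:ℝ)+θ) with hH
  have h1 : H ≠ 0 := GammaNZ (by positivity)
  have h2 : G ≠ 0 := GammaNZ (by linarith)
  have h3 : ((n.factorial : ℝ)) ≠ 0 := by positivity
  have h4 : (2*(n:ℝ)+θ-1) ≠ 0 := by linarith
  field_simp
  ring

lemma acoefN_zz (θ : ℝ) (hθ : 0 < θ) (n : ℕ) :
    acoefN θ 0 0 n = acoef θ 0 0 := by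
  simp only [acoefN, poch, Nat.descFactorial_zero, Nat.cast_one, Nat.cast_zero, add_zero]
  rw [div_self (GammaNZ (by positivity : (0:ℝ) < (n:ℝ)+θ)), mul_one, div_one]

lemma lemB (θ : ℝ) (hθ : 0 < θ) (k j m : ℕ) (hj : j ≤ m+1) :
    ((m:ℝ)+1-j) * ((m:ℝ)+θ+j) * acoefN θ j k (m+1)
      = ((m:ℝ)+1) * ((m:ℝ)+θ) * acoefN θ j k m := by
  rcases Nat.eq_zero_or_pos j with rfl | hj1
  · have he : acoefN θ 0 k (m+1) = acoefN θ 0 k m := by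
      simp only [acoefN, poch, Nat.descFactorial_zero, Nat.cast_zero, add_zero, Nat.cast_one]
      push_cast
      rw [div_self (GammaNZ (by positivity : (0:ℝ) < (m:ℝ)+1+θ)),
          div_self (GammaNZ (by positivity : (0:ℝ) < (m:ℝ)+θ))]
    rw [he]
    push_cast
    ring
  · obtain ⟨i, rfl⟩ : ∃ i, j = i+1 := ⟨j-1, by omega⟩
    have him : i ≤ m := by omega
    have hd1 : (((m+1).descFactorial (i+1) : ℕ) : ℝ) = ((m:ℝ)+1) * (m.descFactorial i : ℝ) := by
      rw [Nat.succ_descFactorial_succ]; push_cast; ring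
    have hd2 : ((m.descFactorial (i+1) : ℕ) : ℝ) = ((m:ℝ)-i) * (m.descFactorial i : ℝ) := by
      rw [Nat.descFactorial_succ]; push_cast [Nat.cast_sub him]; ring
    simp only [acoefN, poch]
    rw [hd1, hd2]
    push_cast
    rw [show ((m:ℝ)+1+θ) = ((m:ℝ)+θ)+1 by ring,
        Real.Gamma_add_one (by positivity : ((m:ℝ)+θ) ≠ 0),
        show ((m:ℝ)+θ+1+((i:ℝ)+1)) = ((m:ℝ)+θ+((i:ℝ)+1))+1 by ring,
        Real.Gamma_add_one (by positivity : ((m:ℝ)+θ+((i:ℝ)+1)) ≠ 0)]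
    set G := Real.Gamma ((m:ℝ)+θ) with hGd
    set H := Real.Gamma ((m:ℝ)+θ+((i:ℝ)+1)) with hHd
    have h1 : G ≠ 0 := GammaNZ (by positivity)
    have h2 : H ≠ 0 := GammaNZ (by positivity)
    field_simp
    ring

lemma lemB' (θ : ℝ) (hθ : 0 < θ) (k j m : ℕ) (hj : j ≤ m+1) :
    lamWF θ j * acoefN θ j k (m+1)
      = lamWF θ (m+1) * acoefN θ j k (m+1) - lamWF θ (m+1) * acoefN θ j k m := by
  have h := lemB θ hθ k j m hj
  simp only [lamWF]
  push_cast
  linear_combination (-1/2 : ℝ) * h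

/-- `Σ_{j=k}^n (−1)^{j−k+1} a_{j,k}^{(θ,n)} λ_j` equals `λ_n`
if `k = n−1`, `−λ_n` if `k = n`, and `0` if `k < n−1`; i.e. the dual
transition probabilities have derivative at `t = 0` given by the pure-death
rates. -/
theorem dual_rates_at_zero (θ : ℝ) (hθ : 0 < θ)
    (k n : ℕ) (hkn : k ≤ n) :
    (k + 1 = n →
      (∑ j ∈ Finset.Icc k n, (-1 : ℝ) ^ (j - k + 1) * acoefN θ j k n * lamWF θ j)
        = lamWF θ n)
    ∧ (k = n →
      (∑ j ∈ Finset.Icc k n, (-1 : ℝ) ^ (j - k + 1) * acoefN θ j k n * lamWF θ j)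
        = -(lamWF θ n))
    ∧ (k + 1 < n →
      (∑ j ∈ Finset.Icc k n, (-1 : ℝ) ^ (j - k + 1) * acoefN θ j k n * lamWF θ j)
        = 0) := by
  have master : ∑ j ∈ Finset.Icc k n, (-1 : ℝ) ^ (j - k + 1) * acoefN θ j k n * lamWF θ j
      = (if k+1 = n then lamWF θ n else 0) - (if k = n then lamWF θ n else 0) := by
    rcases eq_or_lt_of_le hkn with rfl | hlt
    · rw [Finset.Icc_self, Finset.sum_singleton]
      rw [if_neg (by omega), if_pos rfl, zero_sub, Nat.sub_self, pow_one]
      rcases Nat.eq_zero_or_pos k with rfl | hk1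
      · simp [lamWF]
      · rw [acoefN_diag θ hθ k hk1]; ring
    · obtain ⟨m, rfl⟩ : ∃ m, n = m+1 := ⟨n-1, by omega⟩
      have hkm : k ≤ m := by omega
      rw [if_neg (by omega : ¬ (k = m+1)), sub_zero]
      have hrw : ∀ j ∈ Finset.Icc k (m+1),
          (-1 : ℝ) ^ (j - k + 1) * acoefN θ j k (m+1) * lamWF θ j
            = lamWF θ (m+1) * ((-1:ℝ)^(j-k) * acoefN θ j k m)
              - lamWF θ (m+1) * ((-1:ℝ)^(j-k) * acoefN θ j k (m+1)) := by
        intro j hj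
        simp only [Finset.mem_Icc] at hj
        have hB := lemB' θ hθ k j m hj.2
        rw [pow_succ]
        linear_combination (-(-1:ℝ)^(j-k)) * hB
      rw [Finset.sum_congr rfl hrw, Finset.sum_sub_distrib, ← Finset.mul_sum, ← Finset.mul_sum]
      have hT2 : ∑ j ∈ Finset.Icc k (m+1), (-1:ℝ)^(j-k) * acoefN θ j k m
          = ∑ j ∈ Finset.Icc k m, (-1:ℝ)^(j-k) * acoefN θ j k m := by
        rw [Finset.sum_Icc_succ_top (by omega), acoefN_of_lt θ k (m+1) m (by omega)]
        ring
      rw [hT2]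
      by_cases hk0 : k = 0
      · subst hk0
        have hsplit1 : Finset.Icc 0 (m+1) = insert 0 (Finset.Icc 1 (m+1)) := by
          ext x; simp only [Finset.mem_Icc, Finset.mem_insert]; omega
        have hT1 : ∑ j ∈ Finset.Icc 0 (m+1), (-1:ℝ)^(j-0) * acoefN θ j 0 (m+1)
            = acoef θ 0 0 + (-1) := by
          rw [hsplit1, Finset.sum_insert (by simp)]
          have hs := sumA θ hθ 0 (m+1) (by omega)
          rw [show max 0 1 = 1 from rfl, if_pos rfl] at hs
          rw [hs, pow_zero, one_mul, acoefN_zz θ hθ]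
        rw [hT1]
        rcases Nat.eq_zero_or_pos m with rfl | hm1
        · rw [Finset.Icc_self, Finset.sum_singleton, pow_zero, one_mul, acoefN_zz θ hθ,
            if_pos rfl]
          ring
        · have hsplit2 : Finset.Icc 0 m = insert 0 (Finset.Icc 1 m) := by
            ext x; simp only [Finset.mem_Icc, Finset.mem_insert]; omega
          rw [hsplit2, Finset.sum_insert (by simp)]
          have hs := sumA θ hθ 0 m (by omega)
          rw [show max 0 1 = 1 from rfl, if_pos rfl] at hs
          rw [hs, pow_zero, one_mul, acoefN_zz θ hθ, if_neg (by omega)]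
          ring
      · have hk1 : 1 ≤ k := by omega
        have hT1 : ∑ j ∈ Finset.Icc k (m+1), (-1:ℝ)^(j-k) * acoefN θ j k (m+1) = 0 := by
          have hs := sumA θ hθ k (m+1) (by omega)
          rwa [max_eq_left hk1, if_neg hk0] at hs
        rw [hT1, mul_zero, sub_zero]
        rcases eq_or_lt_of_le hkm with rfl | hkm'
        · rw [Finset.Icc_self, Finset.sum_singleton, Nat.sub_self, pow_zero, one_mul,
            acoefN_diag θ hθ k hk1, if_pos rfl]
          ring
        · have hs := sumA θ hθ k m hkm'
          rw [max_eq_left hk1, if_neg hk0] at hs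
          rw [hs, mul_zero, if_neg (by omega)]
  refine ⟨?_, ?_, ?_⟩
  · intro h; rw [master, if_pos h, if_neg (by omega), sub_zero]
  · intro h; rw [master, if_neg (by omega), if_pos h, zero_sub]
  · intro h; rw [master, if_neg (by omega), if_neg (by omega), sub_zero]
end

section
/- Fix θ > 0, t > 0, α ∈ (1/2, 1), and let π(ds) = p(s) ds be a Borel measure on (0,∞) with density p satisfying p(s) s^{1+α} → c for some constant c > 0 as s ↓ 0, and ∫_{(0,∞)} s π(ds) < ∞. Let ψ(λ) = ∫_{(0,∞)} (1 − e^{−λs}) π(ds) (drift β = 0). Then for every integer m ≥ 0, the sequence b_k(m) := a_{k,m}^{(θ)} e^{−t ψ(λ_k)} (k ≥ m) is eventually strictly decreasing in k and converges to 0 as k → ∞; in particular B_m := inf{ i ≥ 0 : b_{i+m+1}(m) < b_{i+m}(m) } is finite. -/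
open MeasureTheory Filter

lemma exp_ub (x : ℝ) : 1 - Real.exp (-x) ≤ x := by
  nlinarith [Real.add_one_le_exp (-x)]

lemma exp_lb (x : ℝ) (hx0 : 0 ≤ x) (hx1 : x ≤ 1) :
    x * Real.exp (-1) ≤ 1 - Real.exp (-x) := by
  have h := Real.add_one_le_exp x
  have hinv : Real.exp x * Real.exp (-x) = 1 := by rw [← Real.exp_add]; simp
  have hpos := Real.exp_pos (-x)
  have hmon : Real.exp (-1) ≤ Real.exp (-x) := Real.exp_le_exp.mpr (by linarith)
  nlinarith

lemma eight_le_exp3 : (8 : ℝ) ≤ Real.exp 3 := by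
  have h : Real.exp 3 = Real.exp 1 * Real.exp 1 * Real.exp 1 := by
    rw [← Real.exp_add, ← Real.exp_add]; norm_num
  nlinarith [Real.exp_one_gt_d9]

lemma integ_onesub (p : ℝ → ℝ) (hp0 : ∀ s, 0 ≤ p s) (hpmeas : Measurable p)
    (hmom : IntegrableOn (fun s => s * p s) (Set.Ioi (0 : ℝ))) (l : ℝ) (hl : 0 ≤ l) :
    IntegrableOn (fun s => (1 - Real.exp (-l * s)) * p s) (Set.Ioi (0 : ℝ)) := by
  apply Integrable.mono' (hmom.const_mul l)
  · exact ((measurable_const.sub ((Real.measurable_exp.comp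
      (measurable_const.mul measurable_id)))).mul hpmeas).aestronglyMeasurable
  · filter_upwards [ae_restrict_mem measurableSet_Ioi] with s hs
    have hs0 : 0 < s := hs
    have h1 : 0 ≤ 1 - Real.exp (-l * s) := by
      have : Real.exp (-l * s) ≤ 1 := Real.exp_le_one_iff.mpr (by nlinarith)
      linarith
    have h2 : 1 - Real.exp (-l * s) ≤ l * s := by
      have h := exp_ub (l * s)
      have : -l * s = -(l * s) := by ring
      rw [this]; linarith
    rw [Real.norm_eq_abs, abs_of_nonneg (mul_nonneg h1 (hp0 s))]
    calc (1 - Real.exp (-l * s)) * p s ≤ (l * s) * p s :=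
          mul_le_mul_of_nonneg_right h2 (hp0 s)
      _ = l * (s * p s) := by ring

lemma psi_diff (p : ℝ → ℝ) (hp0 : ∀ s, 0 ≤ p s) (hpmeas : Measurable p)
    (hmom : IntegrableOn (fun s => s * p s) (Set.Ioi (0 : ℝ)))
    (ψ : ℝ → ℝ)
    (hψ : ∀ l : ℝ, ψ l = ∫ s in Set.Ioi (0 : ℝ), (1 - Real.exp (-l * s)) * p s)
    (l₁ l₂ : ℝ) (h1 : 0 ≤ l₁) (h12 : l₁ ≤ l₂) :
    ψ l₂ - ψ l₁ = ∫ s in Set.Ioi (0 : ℝ),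
      (Real.exp (-l₁ * s) - Real.exp (-l₂ * s)) * p s := by
  have i2 := integ_onesub p hp0 hpmeas hmom l₂ (le_trans h1 h12)
  have i1 := integ_onesub p hp0 hpmeas hmom l₁ h1
  rw [hψ l₂, hψ l₁, ← integral_sub i2 i1]
  apply integral_congr_ae
  filter_upwards with s
  ring

/-- Core lower bound on the increment of ψ. -/
lemma psi_diff_lb (p : ℝ → ℝ) (hp0 : ∀ s, 0 ≤ p s) (hpmeas : Measurable p)
    (hmom : IntegrableOn (fun s => s * p s) (Set.Ioi (0 : ℝ)))
    (ψ : ℝ → ℝ)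
    (hψ : ∀ l : ℝ, ψ l = ∫ s in Set.Ioi (0 : ℝ), (1 - Real.exp (-l * s)) * p s)
    (α c δ : ℝ) (hα0 : 0 < α) (hα1 : α ≤ 1) (hc : 0 < c) (hδ : 0 < δ)
    (hp : ∀ s ∈ Set.Ioo (0:ℝ) δ, c / 2 * s ^ (-(1+α)) ≤ p s)
    (l d : ℝ) (hl : 0 < l) (hd : 0 < d) (hdl : d ≤ l) (hlδ : 1 / l < δ) :
    c / (8 * Real.exp 2) * d * l ^ (α - 1) ≤ ψ (l + d) - ψ l := by
  set a : ℝ := 1 / (2 * l) with ha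
  have ha0 : 0 < a := by positivity
  have h2a : 2 * a = 1 / l := by rw [ha]; field_simp
  have hl2 : l ≤ l + d := by linarith
  rw [psi_diff p hp0 hpmeas hmom ψ hψ l (l + d) hl.le hl2]
  set g : ℝ → ℝ := fun s => (Real.exp (-l * s) - Real.exp (-(l + d) * s)) * p s with hg
  have hg_nonneg : ∀ s ∈ Set.Ioi (0:ℝ), 0 ≤ g s := by
    intro s hs
    have hs0 : (0:ℝ) < s := hs
    apply mul_nonneg _ (hp0 s)
    have : Real.exp (-(l + d) * s) ≤ Real.exp (-l * s) :=
      Real.exp_le_exp.mpr (by nlinarith)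
    linarith
  have hg_int : IntegrableOn g (Set.Ioi (0:ℝ)) := by
    have i2 := integ_onesub p hp0 hpmeas hmom (l + d) (by linarith)
    have i1 := integ_onesub p hp0 hpmeas hmom l hl.le
    have : g = fun s => (1 - Real.exp (-(l+d) * s)) * p s - (1 - Real.exp (-l * s)) * p s := by
      funext s; rw [hg]; ring
    rw [this]
    exact i2.sub i1
  set M : ℝ := Real.exp (-2) * (d * a) * (c / 2 * (2 * a) ^ (-(1+α))) with hM
  have hM0 : 0 ≤ M := by positivity
  have hsub : Set.Ioc a (2*a) ⊆ Set.Ioi (0:ℝ) := fun s hs => lt_trans ha0 hs.1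
  have hptwise : ∀ s ∈ Set.Ioc a (2*a), M ≤ g s := by
    intro s hs
    obtain ⟨hsa, hs2a⟩ := hs
    have hs0 : 0 < s := lt_trans ha0 hsa
    have hla : l * a = 1 / 2 := by rw [ha]; field_simp
    have hls : l * s ≤ 1 := by nlinarith
    have he1 : Real.exp (-1) ≤ Real.exp (-l * s) :=
      Real.exp_le_exp.mpr (by nlinarith)
    have hda1 : d * a ≤ 1 := by nlinarith
    have hmono : Real.exp (-(d * s)) ≤ Real.exp (-(d * a)) :=
      Real.exp_le_exp.mpr (by nlinarith)
    have hlb := exp_lb (d * a) (mul_nonneg hd.le ha0.le) hda1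
    have hfac : d * a * Real.exp (-1) ≤ 1 - Real.exp (-(d * s)) := by linarith
    have hsδ : s ∈ Set.Ioo (0:ℝ) δ := ⟨hs0, by
      calc s ≤ 2 * a := hs2a
        _ = 1 / l := h2a
        _ < δ := hlδ⟩
    have hps := hp s hsδ
    have hrp : (2*a) ^ (-(1+α)) ≤ s ^ (-(1+α)) := by
      apply Real.rpow_le_rpow_of_nonpos hs0 hs2a (by linarith)
    have hps2 : c / 2 * (2*a) ^ (-(1+α)) ≤ p s := by
      calc c / 2 * (2*a) ^ (-(1+α)) ≤ c / 2 * s ^ (-(1+α)) := by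
            apply mul_le_mul_of_nonneg_left hrp (by positivity)
        _ ≤ p s := hps
    have hsplit : Real.exp (-l * s) - Real.exp (-(l + d) * s)
        = Real.exp (-l * s) * (1 - Real.exp (-(d * s))) := by
      rw [mul_sub, mul_one, ← Real.exp_add]; ring_nf
    rw [hg]
    simp only []
    rw [hsplit]
    have step1 : Real.exp (-2) * (d * a) ≤ Real.exp (-l * s) * (1 - Real.exp (-(d * s))) := by
      have e2 : Real.exp (-2) = Real.exp (-1) * Real.exp (-1) := by
        rw [← Real.exp_add]; norm_num
      calc Real.exp (-2) * (d * a) = Real.exp (-1) * (d * a * Real.exp (-1)) := by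
            rw [e2]; ring
        _ ≤ Real.exp (-l * s) * (1 - Real.exp (-(d * s))) := by
            apply mul_le_mul he1 hfac (mul_nonneg (mul_nonneg hd.le ha0.le) (Real.exp_pos _).le) (Real.exp_pos _).le
    have h01 : Real.exp (-(d * s)) ≤ 1 := Real.exp_le_one_iff.mpr (by nlinarith)
    calc M = Real.exp (-2) * (d * a) * (c / 2 * (2*a) ^ (-(1+α))) := hM
      _ ≤ (Real.exp (-l * s) * (1 - Real.exp (-(d * s)))) * p s := by
          apply mul_le_mul step1 hps2
            (mul_nonneg (by linarith) (Real.rpow_nonneg (by linarith) _))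
            (mul_nonneg (Real.exp_pos _).le (by linarith))
  have hint1 : M * a ≤ ∫ s in Set.Ioc a (2*a), g s := by
    have hconst : ∫ s in Set.Ioc a (2*a), M = M * a := by
      rw [setIntegral_const, Real.volume_real_Ioc_of_le (by linarith), smul_eq_mul]
      ring
    rw [← hconst]
    apply setIntegral_mono_on
    · exact integrableOn_const (by rw [Real.volume_Ioc]; exact ENNReal.ofReal_ne_top)
    · exact hg_int.mono_set hsub
    · exact measurableSet_Ioc
    · exact hptwise
  have hint2 : ∫ s in Set.Ioc a (2*a), g s ≤ ∫ s in Set.Ioi (0:ℝ), g s := by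
    apply setIntegral_mono_set hg_int
    · filter_upwards [ae_restrict_mem measurableSet_Ioi] with s hs using hg_nonneg s hs
    · exact HasSubset.Subset.eventuallyLE hsub
  have halg : c / (8 * Real.exp 2) * d * l ^ (α - 1) = M * a := by
    have h2a' : (2*a) ^ (-(1+α)) = l ^ (1+α) := by
      rw [h2a, one_div, Real.inv_rpow hl.le, Real.rpow_neg hl.le, inv_inv]
    have hll : l ^ (1+α) = l ^ (α - 1) * l ^ (2:ℝ) := by
      rw [← Real.rpow_add hl]; congr 1; ring
    have hsq : l ^ (2:ℝ) = l * l := by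
      rw [show (2:ℝ) = ((2:ℕ):ℝ) by norm_num, Real.rpow_natCast]; ring
    rw [hM, h2a', hll, hsq, ha, Real.exp_neg]
    field_simp
    ring
  rw [halg]
  exact le_trans hint1 hint2

lemma acoef_pos (θ : ℝ) (hθ : 0 < θ) (k m : ℕ) (hk : 1 ≤ k) : 0 < acoef θ k m := by
  unfold acoef poch
  have hk1 : (1:ℝ) ≤ (k:ℝ) := by exact_mod_cast hk
  have h1 : (0:ℝ) < 2 * k + θ - 1 := by nlinarith
  have hm0 : (0:ℝ) ≤ (m:ℝ) := Nat.cast_nonneg m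
  have h2 : (0:ℝ) < Real.Gamma ((m:ℝ) + θ + ((k:ℝ) - 1)) :=
    Real.Gamma_pos_of_pos (by nlinarith)
  have h3 : (0:ℝ) < Real.Gamma ((m:ℝ) + θ) := Real.Gamma_pos_of_pos (by nlinarith)
  have h4 : (0:ℝ) < (m.factorial : ℝ) := by exact_mod_cast m.factorial_pos
  have h5 : (0:ℝ) < ((k - m).factorial : ℝ) := by exact_mod_cast (k-m).factorial_pos
  exact div_pos (mul_pos h1 (div_pos h2 h3)) (mul_pos h4 h5)

lemma acoef_le (θ : ℝ) (hθ : 0 < θ) (k m : ℕ) (hk : 3 * (m:ℝ) + θ + 3 ≤ (k:ℝ)) :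
    acoef θ (k+1) m ≤ 4 * acoef θ k m := by
  have hm0 : (0:ℝ) ≤ (m:ℝ) := Nat.cast_nonneg m
  have hkm : m ≤ k := by
    by_contra h
    push_neg at h
    have : (k:ℝ) < (m:ℝ) := by exact_mod_cast h
    linarith
  have hk1 : (1:ℝ) ≤ (k:ℝ) := by nlinarith
  unfold acoef poch
  have e1 : ((k+1 : ℕ) : ℝ) - 1 = (k:ℝ) := by push_cast; ring
  have e2 : (m:ℝ) + θ + (k:ℝ) = ((m:ℝ) + θ + ((k:ℝ) - 1)) + 1 := by ring
  have hpos : (0:ℝ) < (m:ℝ) + θ + ((k:ℝ) - 1) := by nlinarith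
  have e3 : Real.Gamma ((m:ℝ) + θ + (k:ℝ))
      = ((m:ℝ) + θ + ((k:ℝ) - 1)) * Real.Gamma ((m:ℝ) + θ + ((k:ℝ) - 1)) := by
    rw [e2, Real.Gamma_add_one (ne_of_gt hpos)]
  have e4 : ((k + 1 - m).factorial : ℝ) = ((k:ℝ) - (m:ℝ) + 1) * ((k - m).factorial : ℝ) := by
    have : k + 1 - m = (k - m) + 1 := by omega
    rw [this, Nat.factorial_succ]
    push_cast [Nat.cast_sub hkm]
    ring
  rw [e1, e3, e4]
  have h2 : (0:ℝ) < Real.Gamma ((m:ℝ) + θ + ((k:ℝ) - 1)) :=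
    Real.Gamma_pos_of_pos (by positivity)
  have h3 : (0:ℝ) < Real.Gamma ((m:ℝ) + θ) := Real.Gamma_pos_of_pos (by positivity)
  have h4 : (0:ℝ) < (m.factorial : ℝ) := by exact_mod_cast m.factorial_pos
  have h5 : (0:ℝ) < ((k - m).factorial : ℝ) := by exact_mod_cast (k-m).factorial_pos
  set A := Real.Gamma ((m:ℝ) + θ + ((k:ℝ) - 1))
  set G := Real.Gamma ((m:ℝ) + θ)
  set F1 := (m.factorial : ℝ)
  set F2 := ((k - m).factorial : ℝ)
  have hkm1 : (0:ℝ) < (k:ℝ) - (m:ℝ) + 1 := by nlinarith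
  have hG : G ≠ 0 := ne_of_gt h3
  have hF1 : F1 ≠ 0 := ne_of_gt h4
  have hF2 : F2 ≠ 0 := ne_of_gt h5
  have hkm1' : (k:ℝ) - (m:ℝ) + 1 ≠ 0 := ne_of_gt hkm1
  push_cast
  have hden : (0:ℝ) < G * (F1 * F2) := mul_pos h3 (mul_pos h4 h5)
  have L : (2 * ((k:ℝ)+1) + θ - 1) * (((m:ℝ) + θ + ((k:ℝ) - 1)) * A / G) /
        (F1 * (((k:ℝ) - (m:ℝ) + 1) * F2))
      = ((2*((k:ℝ)+1)+θ-1) * ((m:ℝ)+θ+((k:ℝ)-1)) / ((k:ℝ)-(m:ℝ)+1)) * (A/(G*(F1*F2))) := by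
    field_simp
  have R : 4 * ((2 * (k:ℝ) + θ - 1) * (A / G) / (F1 * F2))
      = (4*(2*(k:ℝ)+θ-1)) * (A/(G*(F1*F2))) := by
    field_simp
  rw [L, R]
  apply mul_le_mul_of_nonneg_right _ (le_of_lt (div_pos h2 hden))
  rw [div_le_iff₀ hkm1]
  nlinarith
/-- for a driftless subordinator exponent
`ψ(λ) = ∫_0^∞ (1 − e^{−λs}) p(s) ds` whose Lévy density behaves as
`p(s) ∼ c s^{−(1+α)}` near `0` for some `α ∈ (1/2,1)` and has a finite first
moment, the terms `b_k(m) = a_{k,m}^{(θ)} e^{−tψ(λ_k)}` are eventually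
strictly decreasing in `k` and tend to `0`; in particular
`B_m = inf{i ≥ 0 : b_{i+m+1}(m) < b_{i+m}(m)}` is finite. -/
theorem alternating_terms_eventually_decreasing_stable (θ : ℝ) (hθ : 0 < θ)
    (t : ℝ) (ht : 0 < t)
    (α : ℝ) (hα : α ∈ Set.Ioo (1 / 2 : ℝ) 1)
    (p : ℝ → ℝ) (hp0 : ∀ s, 0 ≤ p s) (hpmeas : Measurable p)
    (c : ℝ) (hc : 0 < c)
    (htail : Tendsto (fun s => p s * s ^ (1 + α))
      (nhdsWithin 0 (Set.Ioi 0)) (nhds c))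
    (hmom : IntegrableOn (fun s => s * p s) (Set.Ioi (0 : ℝ)))
    (ψ : ℝ → ℝ)
    (hψ : ∀ l : ℝ, ψ l = ∫ s in Set.Ioi (0 : ℝ), (1 - Real.exp (-l * s)) * p s)
    (b : ℕ → ℕ → ℝ)
    (hb : ∀ k m : ℕ, b k m = acoef θ k m * Real.exp (-t * ψ (lamWF θ k))) :
    ∀ m : ℕ,
      (∃ N : ℕ, StrictAntiOn (fun k => b k m) (Set.Ici N))
      ∧ Tendsto (fun k => b k m) atTop (nhds 0)
      ∧ {i : ℕ | b (i + m + 1) m < b (i + m) m}.Nonempty := by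
  obtain ⟨hαl, hαr⟩ := hα
  intro m
  -- lower bound on p near 0
  have hev : ∀ᶠ s in nhdsWithin 0 (Set.Ioi (0:ℝ)), c/2 ≤ p s * s ^ (1+α) :=
    htail.eventually (eventually_ge_nhds (by linarith))
  rw [eventually_nhdsWithin_iff, Metric.eventually_nhds_iff] at hev
  obtain ⟨δ, hδ0, hδ⟩ := hev
  have hpb : ∀ s ∈ Set.Ioo (0:ℝ) δ, c/2 * s ^ (-(1+α)) ≤ p s := by
    intro s hs
    have hs0 := hs.1
    have hle : c/2 ≤ p s * s ^ (1+α) :=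
      hδ (by rw [Real.dist_eq, sub_zero, abs_of_pos hs0]; exact hs.2) hs0
    have hx : s ^ (1+α) * s ^ (-(1+α)) = 1 := by
      rw [← Real.rpow_add hs0, show 1 + α + -(1+α) = (0:ℝ) by ring]
      exact Real.rpow_zero s
    calc c/2 * s ^ (-(1+α)) ≤ (p s * s ^ (1+α)) * s ^ (-(1+α)) :=
          mul_le_mul_of_nonneg_right hle (Real.rpow_nonneg hs0.le _)
      _ = p s := by rw [mul_assoc, hx, mul_one]
  -- λ facts
  have lam_succ : ∀ k : ℕ, lamWF θ (k+1) = lamWF θ k + ((k:ℝ) + θ/2) := by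
    intro k; unfold lamWF; push_cast; ring
  have lam_pos : ∀ k : ℕ, 1 ≤ k → 0 < lamWF θ k := by
    intro k hk
    have : (1:ℝ) ≤ (k:ℝ) := by exact_mod_cast hk
    unfold lamWF; nlinarith
  have lam_ge : ∀ k : ℕ, θ/2 * (k:ℝ) ≤ lamWF θ k := by
    intro k
    have h0 : (0:ℝ) ≤ (k:ℝ) := Nat.cast_nonneg k
    unfold lamWF
    rcases Nat.eq_zero_or_pos k with h|h
    · subst h; simp
    · have : (1:ℝ) ≤ (k:ℝ) := by exact_mod_cast h
      nlinarith
  have hlamT : Tendsto (fun k : ℕ => lamWF θ k) atTop atTop :=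
    tendsto_atTop_mono lam_ge
      (Tendsto.const_mul_atTop (by linarith : (0:ℝ) < θ/2) tendsto_natCast_atTop_atTop)
  have hK0 : (0:ℝ) < c / (8 * Real.exp 2) := div_pos hc (by positivity)
  -- eventual lower bound for ψ increments
  have hDev : ∀ᶠ k : ℕ in atTop, 3 / t ≤ ψ (lamWF θ (k+1)) - ψ (lamWF θ k) := by
    have hTT : Tendsto
        (fun k : ℕ => (c / (8 * Real.exp 2) * (1+θ) ^ (α-1)) * ((k:ℝ)) ^ (2*α-1))
        atTop atTop := by
      apply Tendsto.const_mul_atTop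
        (mul_pos hK0 (Real.rpow_pos_of_pos (by linarith) _))
      exact (tendsto_rpow_atTop (by linarith)).comp tendsto_natCast_atTop_atTop
    filter_upwards [hTT.eventually_ge_atTop (3/t), eventually_ge_atTop 3,
      hlamT.eventually_gt_atTop (1/δ)] with k h1 h2 h3
    have hk3 : (3:ℝ) ≤ (k:ℝ) := by exact_mod_cast h2
    have hk1 : 1 ≤ k := le_trans (by norm_num) h2
    have hk0 : (0:ℝ) < (k:ℝ) := by linarith
    have hl := lam_pos k hk1
    have hd : (0:ℝ) < (k:ℝ) + θ/2 := by linarith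
    have hdl : (k:ℝ) + θ/2 ≤ lamWF θ k := by unfold lamWF; nlinarith
    have hlδ : 1 / lamWF θ k < δ := by
      rw [div_lt_iff₀ hl]
      have h4 := (div_lt_iff₀ hδ0).mp h3
      nlinarith
    have hmain := psi_diff_lb p hp0 hpmeas hmom ψ hψ α c δ (by linarith) (by linarith)
      hc hδ0 hpb (lamWF θ k) ((k:ℝ) + θ/2) hl hd hdl hlδ
    rw [← lam_succ k] at hmain
    have hlamle : lamWF θ k ≤ (1+θ) * (k:ℝ) ^ (2:ℕ) := by
      unfold lamWF
      nlinarith [mul_nonneg hθ.le (mul_nonneg hk0.le hk0.le),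
        mul_nonneg hk0.le hk0.le, mul_nonneg hθ.le hk0.le]
    have hr1 : ((1+θ) * (k:ℝ) ^ (2:ℕ)) ^ (α-1) ≤ lamWF θ k ^ (α-1) :=
      Real.rpow_le_rpow_of_nonpos hl hlamle (by linarith)
    have hr2 : ((1+θ) * (k:ℝ) ^ (2:ℕ)) ^ (α-1) = (1+θ) ^ (α-1) * ((k:ℝ)) ^ (2*(α-1)) := by
      rw [Real.mul_rpow (by linarith) (by positivity), ← Real.rpow_natCast (k:ℝ) 2,
        ← Real.rpow_mul hk0.le]
      norm_num
    have hr4 : (1+θ) ^ (α-1) * ((k:ℝ)) ^ (2*(α-1)) ≤ lamWF θ k ^ (α-1) := by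
      rw [← hr2]; exact hr1
    have hr3 : ((k:ℝ)) ^ (2*α-1) = (k:ℝ) * ((k:ℝ)) ^ (2*(α-1)) := by
      rw [show 2*α-1 = 1 + 2*(α-1) by ring, Real.rpow_add hk0, Real.rpow_one]
    have hcomp : (c / (8 * Real.exp 2) * (1+θ) ^ (α-1)) * ((k:ℝ)) ^ (2*α-1)
        ≤ c / (8 * Real.exp 2) * ((k:ℝ) + θ/2) * lamWF θ k ^ (α-1) := by
      have hmid : (k:ℝ) * ((1+θ) ^ (α-1) * ((k:ℝ)) ^ (2*(α-1)))
          ≤ ((k:ℝ) + θ/2) * lamWF θ k ^ (α-1) := by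
        apply mul_le_mul (by linarith) hr4
          (mul_nonneg (Real.rpow_nonneg (by linarith) _) (Real.rpow_nonneg hk0.le _))
          (by linarith)
      calc (c / (8 * Real.exp 2) * (1+θ) ^ (α-1)) * ((k:ℝ)) ^ (2*α-1)
          = c / (8 * Real.exp 2) * ((k:ℝ) * ((1+θ) ^ (α-1) * ((k:ℝ)) ^ (2*(α-1)))) := by
            rw [hr3]; ring
        _ ≤ c / (8 * Real.exp 2) * (((k:ℝ) + θ/2) * lamWF θ k ^ (α-1)) :=
            mul_le_mul_of_nonneg_left hmid hK0.le
        _ = c / (8 * Real.exp 2) * ((k:ℝ) + θ/2) * lamWF θ k ^ (α-1) := by ring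
    linarith
  -- the key eventual step inequality
  have hbig : ∀ᶠ k : ℕ in atTop, (3*(m:ℝ) + θ + 3) ≤ (k:ℝ) :=
    (tendsto_natCast_atTop_atTop (R := ℝ)).eventually_ge_atTop _
  have key : ∀ᶠ k : ℕ in atTop, 0 < b k m ∧ b (k+1) m ≤ b k m / 2 := by
    filter_upwards [hDev, hbig, eventually_ge_atTop 1] with k hD hkm hk1
    have hbpos : 0 < b k m := by
      rw [hb]; exact mul_pos (acoef_pos θ hθ k m hk1) (Real.exp_pos _)
    refine ⟨hbpos, ?_⟩
    have ha4 := acoef_le θ hθ k m hkm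
    have hsplit : Real.exp (-t * ψ (lamWF θ (k+1)))
        = Real.exp (-t * ψ (lamWF θ k)) *
          Real.exp (-(t * (ψ (lamWF θ (k+1)) - ψ (lamWF θ k)))) := by
      rw [← Real.exp_add]; congr 1; ring
    have h3t : (3:ℝ) ≤ t * (ψ (lamWF θ (k+1)) - ψ (lamWF θ k)) := by
      have h := mul_le_mul_of_nonneg_left hD ht.le
      have ht' : t * (3/t) = 3 := by field_simp
      linarith
    have hexp : Real.exp (-(t * (ψ (lamWF θ (k+1)) - ψ (lamWF θ k)))) ≤ 1/8 := by
      have h1 : Real.exp (-(t * (ψ (lamWF θ (k+1)) - ψ (lamWF θ k)))) ≤ Real.exp (-3) :=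
        Real.exp_le_exp.mpr (by linarith)
      have h2 : Real.exp (-3) ≤ 1/8 := by
        rw [Real.exp_neg, one_div]
        exact inv_anti₀ (by norm_num) eight_le_exp3
      linarith
    have hanonneg : (0:ℝ) ≤ 4 * acoef θ k m :=
      mul_nonneg (by norm_num) (acoef_pos θ hθ k m hk1).le
    calc b (k+1) m = acoef θ (k+1) m * Real.exp (-t * ψ (lamWF θ (k+1))) := hb _ _
      _ ≤ (4 * acoef θ k m) * Real.exp (-t * ψ (lamWF θ (k+1))) :=
          mul_le_mul_of_nonneg_right ha4 (Real.exp_pos _).le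
      _ = (4 * acoef θ k m) * (Real.exp (-t * ψ (lamWF θ k)) *
          Real.exp (-(t * (ψ (lamWF θ (k+1)) - ψ (lamWF θ k))))) := by rw [hsplit]
      _ ≤ (4 * acoef θ k m) * (Real.exp (-t * ψ (lamWF θ k)) * (1/8)) := by
          apply mul_le_mul_of_nonneg_left _ hanonneg
          exact mul_le_mul_of_nonneg_left hexp (Real.exp_pos _).le
      _ = (acoef θ k m * Real.exp (-t * ψ (lamWF θ k))) / 2 := by ring
      _ = b k m / 2 := by rw [hb k m]
  obtain ⟨N, hN⟩ := eventually_atTop.mp key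
  have hstep : ∀ k, N ≤ k → b (k+1) m < b k m := by
    intro k hk
    obtain ⟨hpos, hhalf⟩ := hN k hk
    linarith
  have hchain : ∀ i, N ≤ i → ∀ j, i < j → b j m < b i m := by
    intro i hi j
    induction j with
    | zero => intro h; omega
    | succ j ih =>
      intro h
      rcases Nat.lt_or_ge i j with h' | h'
      · exact lt_trans (hstep j (by omega)) (ih h')
      · have hij : i = j := by omega
        subst hij
        exact hstep i hi
  refine ⟨⟨N, ?_⟩, ?_, ⟨N, ?_⟩⟩
  · intro x hx y hy hxy
    exact hchain x hx y hxy
  · have hle : ∀ n : ℕ, b (N + n) m ≤ b N m * (1/2)^n := by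
      intro n
      induction n with
      | zero => simp
      | succ n ih =>
        have h := (hN (N+n) (Nat.le_add_right N n)).2
        calc b (N+n+1) m ≤ b (N+n) m / 2 := h
          _ ≤ (b N m * (1/2)^n) / 2 := by linarith
          _ = b N m * (1/2)^(n+1) := by ring
    have hnn : ∀ n : ℕ, 0 ≤ b (N+n) m := fun n => (hN (N+n) (Nat.le_add_right N n)).1.le
    have hgeo : Tendsto (fun n : ℕ => b N m * (1/2)^n) atTop (nhds 0) := by
      have h := (tendsto_pow_atTop_nhds_zero_of_lt_one
        (by norm_num : (0:ℝ) ≤ 1/2) (by norm_num)).const_mul (b N m)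
      simpa using h
    have h0 : Tendsto (fun n : ℕ => b (N + n) m) atTop (nhds 0) := squeeze_zero hnn hle hgeo
    have h0' : Tendsto (fun n : ℕ => b (n + N) m) atTop (nhds 0) := by
      simpa [Nat.add_comm] using h0
    exact (tendsto_add_atTop_iff_nat N).mp h0'
  · show b (N + m + 1) m < b (N + m) m
    exact hstep (N + m) (Nat.le_add_right N m)
end
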